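/- Let X and Y be finite-dimensional real normed linear spaces and let x ∈ X be a k-smooth point. Suppose f₁, …, f_k ∈ J(x) are linearly independent. If a linear operator T : X → Y satisfies Tx ⊥_B Tz for all z ∈ ker f_i, for each 1 ≤ i ≤ k, and Tx ≠ 0, then Tx is a p-smooth point of Y for some p ≥ k (i.e., dim span J(Tx) ≥ k). -/

import Mathlib

/-- Birkhoff-James orthogonality. -/
def BJOrth {X : Type*} [NormedAddCommGroup X] [NormedSpace ℝ X] (x y : X) : Prop :=
  ∀ t : ℝ, ‖x‖ ≤ ‖x + t • y‖

/-- The set of support functionals at `x`. -/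
def suppFun {X : Type*} [NormedAddCommGroup X] [NormedSpace ℝ X] (x : X) :
    Set (X →L[ℝ] ℝ) := {f | ‖f‖ = 1 ∧ f x = ‖x‖}

lemma exists_supp_annihilator {Y : Type*} [NormedAddCommGroup Y] [NormedSpace ℝ Y]
    [FiniteDimensional ℝ Y] (y : Y) (hy : y ≠ 0) (W : Submodule ℝ Y)
    (horth : ∀ w ∈ W, ‖y‖ ≤ ‖y + w‖) :
    ∃ g : Y →L[ℝ] ℝ, ‖g‖ = 1 ∧ g y = ‖y‖ ∧ ∀ w ∈ W, g w = 0 := by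
  haveI : IsClosed (W : Set Y) := Submodule.closed_of_finiteDimensional W
  -- quotient map as a continuous linear map
  let π : Y →L[ℝ] Y ⧸ W :=
    LinearMap.mkContinuous W.mkQ 1 (fun m => by
      simpa using Submodule.Quotient.norm_mk_le W m)
  have hπ : ∀ z : Y, π z = Submodule.Quotient.mk z := fun z => rfl
  have hnorm : ‖π y‖ = ‖y‖ := by
    refine le_antisymm (by simpa [hπ] using Submodule.Quotient.norm_mk_le W y) ?_
    by_contra h
    push_neg at h
    obtain ⟨m, hm, hm'⟩ := QuotientAddGroup.norm_lt_iff.1 h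
    have : m - y ∈ W := by
      have := (Submodule.Quotient.eq W).1 (hm.trans (hπ y))
      exact this
    have := horth (m - y) this
    simp only [add_sub_cancel] at this
    linarith
  have hπy : π y ≠ 0 := by
    intro h; apply hy; rw [h, norm_zero] at hnorm; exact norm_eq_zero.1 hnorm.symm
  obtain ⟨ψ, hψ1, hψ2⟩ := exists_dual_vector ℝ (π y) (norm_ne_zero_iff.2 hπy)
  refine ⟨ψ.comp π, ?_, ?_, ?_⟩
  · apply le_antisymm
    · apply ContinuousLinearMap.opNorm_le_bound _ zero_le_one
      intro z
      rw [one_mul]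
      calc ‖(ψ.comp π) z‖ = ‖ψ (π z)‖ := rfl
        _ ≤ ‖ψ‖ * ‖π z‖ := ψ.le_opNorm _
        _ = ‖π z‖ := by rw [hψ1, one_mul]
        _ ≤ ‖z‖ := by rw [hπ]; exact Submodule.Quotient.norm_mk_le W z
    · have h := (ψ.comp π).le_opNorm y
      have heq : (ψ.comp π) y = ‖y‖ := by
        rw [ContinuousLinearMap.comp_apply, hψ2, hnorm]; norm_cast
      rw [heq, Real.norm_of_nonneg (norm_nonneg y)] at h
      have hy' : 0 < ‖y‖ := norm_pos_iff.2 hy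
      nlinarith
  · rw [ContinuousLinearMap.comp_apply, hψ2, hnorm]; norm_cast
  · intro w hw
    have : π w = 0 := by
      rw [hπ, Submodule.Quotient.mk_eq_zero]; exact hw
    rw [ContinuousLinearMap.comp_apply, this, map_zero]

theorem stmt_15 {X Y : Type*} [NormedAddCommGroup X] [NormedSpace ℝ X]
    [NormedAddCommGroup Y] [NormedSpace ℝ Y]
    [FiniteDimensional ℝ X] [FiniteDimensional ℝ Y]
    (x : X) (hx : x ≠ 0) (k : ℕ)
    (hsm : Module.finrank ℝ (Submodule.span ℝ (suppFun x)) = k)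
    (f : Fin k → (X →L[ℝ] ℝ)) (hf : ∀ i, f i ∈ suppFun x)
    (hind : LinearIndependent ℝ f)
    (T : X →L[ℝ] Y) (hTx : T x ≠ 0)
    (hpres : ∀ i : Fin k, ∀ z : X, f i z = 0 → BJOrth (T x) (T z)) :
    k ≤ Module.finrank ℝ (Submodule.span ℝ (suppFun (T x))) := by
  have hxnorm : (0:ℝ) < ‖x‖ := norm_pos_iff.2 hx
  have hTxnorm : (0:ℝ) < ‖T x‖ := norm_pos_iff.2 hTx
  -- choose g i
  have hg : ∀ i : Fin k, ∃ g : Y →L[ℝ] ℝ, ‖g‖ = 1 ∧ g (T x) = ‖T x‖ ∧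
      ∀ z : X, f i z = 0 → g (T z) = 0 := by
    intro i
    obtain ⟨g, hg1, hg2, hg3⟩ := exists_supp_annihilator (T x) hTx
      ((LinearMap.ker (f i : X →ₗ[ℝ] ℝ)).map (T : X →ₗ[ℝ] Y))
      (by
        rintro w ⟨z, hz, rfl⟩
        have := hpres i z (by simpa using hz) 1
        simpa using this)
    exact ⟨g, hg1, hg2, fun z hz => hg3 (T z) ⟨z, by simpa using hz, rfl⟩⟩
  choose g hg1 hg2 hg3 using hg
  -- g i ∘ T = (‖T x‖ / ‖x‖) • f i
  set c : ℝ := ‖T x‖ / ‖x‖ with hc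
  have hcne : c ≠ 0 := div_ne_zero (ne_of_gt hTxnorm) (ne_of_gt hxnorm)
  have hcomp : ∀ i, (g i).comp T = c • f i := by
    intro i
    ext z
    have hfx : f i x = ‖x‖ := (hf i).2
    set w : X := z - (f i z / ‖x‖) • x with hw
    have hfw : f i w = 0 := by
      simp [hw, map_sub, map_smul, hfx, div_mul_cancel₀ _ (ne_of_gt hxnorm)]
    have hz : z = (f i z / ‖x‖) • x + w := by simp [hw]
    calc (g i) (T z) = (g i) (T ((f i z / ‖x‖) • x + w)) := by rw [← hz]
      _ = (f i z / ‖x‖) * (g i) (T x) + (g i) (T w) := by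
          simp [map_add, map_smul]
      _ = (f i z / ‖x‖) * ‖T x‖ := by rw [hg2 i, hg3 i w hfw, add_zero]
      _ = c * f i z := by rw [hc]; ring
      _ = (c • f i) z := rfl
  -- linear independence of g
  have hgind : LinearIndependent ℝ g := by
    let Φ : (Y →L[ℝ] ℝ) →ₗ[ℝ] (X →L[ℝ] ℝ) :=
      { toFun := fun h => h.comp T
        map_add' := fun a b => by ext z; simp
        map_smul' := fun a b => by ext z; simp }
    have hcf : LinearIndependent ℝ (fun i => c • f i) := by
      have := hind.map' (c • (LinearMap.id : (X →L[ℝ] ℝ) →ₗ[ℝ] (X →L[ℝ] ℝ)))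
        (by rw [LinearMap.ker_smul _ c hcne, LinearMap.ker_id])
      have h2 : (⇑(c • (LinearMap.id : (X →L[ℝ] ℝ) →ₗ[ℝ] (X →L[ℝ] ℝ))) ∘ f) = fun i => c • f i := by
        funext i
        simp
      rw [h2] at this
      exact this
    have : Φ ∘ g = fun i => c • f i := by
      funext i; exact hcomp i
    exact LinearIndependent.of_comp Φ (by rw [this]; exact hcf)
  -- conclude
  have hsub : Submodule.span ℝ (Set.range g) ≤ Submodule.span ℝ (suppFun (T x)) := by
    apply Submodule.span_mono
    rintro _ ⟨i, rfl⟩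
    exact ⟨hg1 i, hg2 i⟩
  have h1 : Module.finrank ℝ (Submodule.span ℝ (Set.range g)) = k := by
    rw [finrank_span_eq_card hgind, Fintype.card_fin]
  calc k = Module.finrank ℝ (Submodule.span ℝ (Set.range g)) := h1.symm
    _ ≤ Module.finrank ℝ (Submodule.span ℝ (suppFun (T x))) := Submodule.finrank_mono hsub
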